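/- Let ζ^ψ = ζ⁰(Σ) + ψ·ζ̃ and ψ_min = min(ψ_ν,ψ_σ,ψ_η,ψ_ξ). Then for every ε ≥ 0 and every ζ ∈ ℝ⁴ with ‖ζ − ζ^ψ‖ ≤ ε, one has the upper bound H₁(ζ) ≤ −(ψ/2)·v^⊤ζ̃ + ( ψ_min⁻¹·(‖ζ̃‖ + ε/ψ) + ‖v‖ )·ε. -/

import Mathlib

open Finset

noncomputable section

namespace Stmt14

/-- The Euclidean norm of a vector in `ℝ^m`. -/
def enorm {m : ℕ} (z : Fin m → ℝ) : ℝ := Real.sqrt (∑ i, z i ^ 2)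

/-- The reference control `ζ⁰(Σ) = (0, Σ, 0, 0)`. -/
def zeta0 (Sig : ℝ) : Fin 4 → ℝ := ![0, Sig, 0, 0]

/-- The fourth standard basis vector `e₄` of `ℝ⁴`. -/
def e4 : Fin 4 → ℝ := fun i => if i = 3 then 1 else 0

/-- `c^⊤ Ψ v` for the diagonal matrix `Ψ = diag psi`. -/
def cPv (psi c v : Fin 4 → ℝ) : ℝ := ∑ i, c i * psi i * v i

/-- `c^⊤ Ψ c` for the diagonal matrix `Ψ = diag psi`. -/
def cPc (psi c : Fin 4 → ℝ) : ℝ := ∑ i, c i * psi i * c i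

/-- The Lagrange multiplier `λ`. -/
def lam (psi c v : Fin 4 → ℝ) : ℝ :=
  if 0 ≤ v 3 - cPv psi c v / cPc psi c * c 3 then cPv psi c v / cPc psi c
  else (cPv psi c v - c 3 * v 3 * psi 3) / (cPc psi c - c 3 ^ 2 * psi 3)

/-- The Lagrange multiplier `μ = max (-(v₄ - λ c₄)) 0`. -/
def mu (psi c v : Fin 4 → ℝ) : ℝ := max (-(v 3 - lam psi c v * c 3)) 0

/-- `ζ̃ = Ψ (v - λ c + μ e₄)`. -/
def zetaTilde (psi c v : Fin 4 → ℝ) : Fin 4 → ℝ := fun i =>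
  psi i * (v i - lam psi c v * c i + mu psi c v * e4 i)

/-- `H₁(ζ) = (1/(2ψ)) (ζ - ζ⁰(Σ))^⊤ Ψ⁻¹ (ζ - ζ⁰(Σ)) - v^⊤ (ζ - ζ⁰(Σ))`. -/
def H1 (Sig ψ : ℝ) (psi v : Fin 4 → ℝ) (z : Fin 4 → ℝ) : ℝ :=
  (1 / (2 * ψ)) * ∑ i, (z i - zeta0 Sig i) ^ 2 / psi i -
    ∑ i, v i * (z i - zeta0 Sig i)

/-- `ψ_min = min(ψ_ν, ψ_σ, ψ_η, ψ_ξ)`. -/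
def psiMin (psi : Fin 4 → ℝ) : ℝ := Finset.univ.inf' Finset.univ_nonempty psi

/-- KKT orthogonality: `c ⬝ ζ̃ = 0` and `μ ζ̃₃ = 0`. -/
lemma kkt (psi c v : Fin 4 → ℝ) (hpsi : ∀ i, 0 < psi i) (hc : c 0 ≠ 0) :
    (∑ i, c i * zetaTilde psi c v i = 0) ∧ mu psi c v * zetaTilde psi c v 3 = 0 := by
  have he0 : e4 0 = 0 := rfl
  have he1 : e4 1 = 0 := rfl
  have he2 : e4 2 = 0 := rfl
  have he3 : e4 3 = 1 := rfl
  have hcPc : cPc psi c = c 0 ^ 2 * psi 0 + c 1 ^ 2 * psi 1 + c 2 ^ 2 * psi 2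
      + c 3 ^ 2 * psi 3 := by
    simp [cPc, Fin.sum_univ_four]; ring
  have hc0 : 0 < c 0 ^ 2 := by positivity
  have hD : 0 < cPc psi c - c 3 ^ 2 * psi 3 := by
    rw [hcPc]
    nlinarith [mul_pos hc0 (hpsi 0), mul_nonneg (sq_nonneg (c 1)) (hpsi 1).le,
      mul_nonneg (sq_nonneg (c 2)) (hpsi 2).le]
  have hP : 0 < cPc psi c := by
    nlinarith [hD, mul_nonneg (sq_nonneg (c 3)) (hpsi 3).le]
  have hsum : ∑ i, c i * zetaTilde psi c v i
      = cPv psi c v - lam psi c v * cPc psi c + mu psi c v * (c 3 * psi 3) := by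
    simp only [zetaTilde, Fin.sum_univ_four, cPv, cPc, he0, he1, he2, he3]
    ring
  by_cases hif : 0 ≤ v 3 - cPv psi c v / cPc psi c * c 3
  · have hL : lam psi c v = cPv psi c v / cPc psi c := by rw [lam, if_pos hif]
    have hM : mu psi c v = 0 := by
      rw [mu, hL, max_eq_right]; linarith
    constructor
    · rw [hsum, hM, hL]; field_simp; ring
    · rw [hM]; ring
  · push_neg at hif
    have hL : lam psi c v = (cPv psi c v - c 3 * v 3 * psi 3) /
        (cPc psi c - c 3 ^ 2 * psi 3) := by rw [lam, if_neg (not_le.mpr hif)]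
    have hnum : v 3 * cPc psi c < cPv psi c v * c 3 := by
      rw [sub_neg, div_mul_eq_mul_div, lt_div_iff₀ hP] at hif
      linarith
    have hkey : v 3 - lam psi c v * c 3 < 0 := by
      rw [hL]
      have h2 : v 3 - (cPv psi c v - c 3 * v 3 * psi 3) / (cPc psi c - c 3 ^ 2 * psi 3) * c 3
          = (v 3 * cPc psi c - cPv psi c v * c 3) / (cPc psi c - c 3 ^ 2 * psi 3) := by
        field_simp
        ring
      rw [h2]
      exact div_neg_of_neg_of_pos (by linarith) hD
    have hM : mu psi c v = -(v 3 - lam psi c v * c 3) := by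
      rw [mu, max_eq_left]; linarith
    have hz3 : zetaTilde psi c v 3 = 0 := by
      simp [zetaTilde, he3, hM]
    refine ⟨?_, by rw [hz3]; ring⟩
    rw [hsum, hM, hL]
    field_simp
    ring

/-- The key identity `∑ ζ̃ᵢ²/ψᵢ = ∑ vᵢ ζ̃ᵢ`. -/
lemma sq_sum_eq (psi c v : Fin 4 → ℝ) (hpsi : ∀ i, 0 < psi i) (hc : c 0 ≠ 0) :
    ∑ i, zetaTilde psi c v i ^ 2 / psi i = ∑ i, v i * zetaTilde psi c v i := by
  obtain ⟨hct, hm3⟩ := kkt psi c v hpsi hc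
  have hztdef : ∀ i, zetaTilde psi c v i
      = psi i * (v i - lam psi c v * c i + mu psi c v * e4 i) := fun i => rfl
  have per : ∀ i, zetaTilde psi c v i ^ 2 / psi i
      = zetaTilde psi c v i * (v i - lam psi c v * c i + mu psi c v * e4 i) := by
    intro i
    rw [hztdef i]
    field_simp [(hpsi i).ne']
  have he0 : e4 0 = 0 := rfl
  have he1 : e4 1 = 0 := rfl
  have he2 : e4 2 = 0 := rfl
  have he3 : e4 3 = 1 := rfl
  have expand : ∑ i, zetaTilde psi c v i * (v i - lam psi c v * c i + mu psi c v * e4 i)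
      = (∑ i, v i * zetaTilde psi c v i) - lam psi c v * (∑ i, c i * zetaTilde psi c v i)
        + mu psi c v * zetaTilde psi c v 3 := by
    simp only [Fin.sum_univ_four, he0, he1, he2, he3]
    ring
  rw [Finset.sum_congr rfl fun i _ => per i, expand, hct, hm3]
  ring

/-- For every `ε ≥ 0` and every `ζ` with `‖ζ - ζ^ψ‖ ≤ ε` (where `ζ^ψ = ζ⁰(Σ) + ψ ζ̃`):
`H₁(ζ) ≤ -(ψ/2) v^⊤ ζ̃ + (ψ_min⁻¹ (‖ζ̃‖ + ε/ψ) + ‖v‖) ε`. -/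
theorem H1_upper_bound_near_candidate
    (Sig : ℝ) (hSig : 0 < Sig) (psi c v : Fin 4 → ℝ)
    (hpsi : ∀ i, 0 < psi i) (hc : c 0 ≠ 0)
    (ψ : ℝ) (hψ : 0 < ψ) :
    ∀ ε : ℝ, 0 ≤ ε → ∀ z : Fin 4 → ℝ,
      enorm (fun i => z i - (zeta0 Sig i + ψ * zetaTilde psi c v i)) ≤ ε →
      H1 Sig ψ psi v z ≤
        -(ψ / 2) * (∑ i, v i * zetaTilde psi c v i) +
          ((psiMin psi)⁻¹ * (enorm (zetaTilde psi c v) + ε / ψ) + enorm v) * ε := by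
  intro ε hε z hz
  set d : Fin 4 → ℝ := fun i => z i - (zeta0 Sig i + ψ * zetaTilde psi c v i) with hd
  have hdi : ∀ i, d i = z i - (zeta0 Sig i + ψ * zetaTilde psi c v i) := fun i => rfl
  -- facts about psiMin
  have hmin_pos : 0 < psiMin psi := (Finset.lt_inf'_iff _).mpr fun i _ => hpsi i
  have hmin_le : ∀ i, psiMin psi ≤ psi i := fun i => Finset.inf'_le _ (Finset.mem_univ i)
  -- norm facts
  have hd2 : ∑ i, d i ^ 2 ≤ ε ^ 2 := by
    have h0 : (0:ℝ) ≤ ∑ i, d i ^ 2 := Finset.sum_nonneg fun i _ => sq_nonneg _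
    have hs := Real.sq_sqrt h0
    have hz' : Real.sqrt (∑ i, d i ^ 2) ≤ ε := hz
    nlinarith [Real.sqrt_nonneg (∑ i, d i ^ 2)]
  have hnd : enorm d ≤ ε := hz
  have cs : ∀ f g : Fin 4 → ℝ, (∑ i, |f i| * |g i|) ≤ enorm f * enorm g := by
    intro f g
    have := Real.sum_mul_le_sqrt_mul_sqrt Finset.univ (fun i => |f i|) (fun i => |g i|)
    simpa [enorm, sq_abs] using this
  have hnormnn : ∀ f : Fin 4 → ℝ, 0 ≤ enorm f := fun f => Real.sqrt_nonneg _
  -- the three error bounds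
  have B1 : ∑ i, zetaTilde psi c v i * d i / psi i
      ≤ (psiMin psi)⁻¹ * (enorm (zetaTilde psi c v) * ε) := by
    calc ∑ i, zetaTilde psi c v i * d i / psi i
        ≤ ∑ i, |zetaTilde psi c v i| * |d i| / psiMin psi := by
          refine Finset.sum_le_sum fun i _ => ?_
          rw [← abs_mul]
          exact div_le_div₀ (abs_nonneg _) (le_abs_self _) hmin_pos (hmin_le i)
      _ = (psiMin psi)⁻¹ * ∑ i, |zetaTilde psi c v i| * |d i| := by
          rw [← Finset.sum_div, div_eq_inv_mul]
      _ ≤ (psiMin psi)⁻¹ * (enorm (zetaTilde psi c v) * enorm d) :=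
          mul_le_mul_of_nonneg_left (cs _ _) (inv_nonneg.mpr hmin_pos.le)
      _ ≤ (psiMin psi)⁻¹ * (enorm (zetaTilde psi c v) * ε) := by
          have := mul_le_mul_of_nonneg_left hnd (hnormnn (zetaTilde psi c v))
          exact mul_le_mul_of_nonneg_left this (inv_nonneg.mpr hmin_pos.le)
  have hB : ∑ i, d i ^ 2 / psi i ≤ (psiMin psi)⁻¹ * ε ^ 2 := by
    calc ∑ i, d i ^ 2 / psi i ≤ ∑ i, d i ^ 2 / psiMin psi :=
          Finset.sum_le_sum fun i _ =>
            div_le_div₀ (sq_nonneg _) le_rfl hmin_pos (hmin_le i)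
      _ = (psiMin psi)⁻¹ * ∑ i, d i ^ 2 := by rw [← Finset.sum_div, div_eq_inv_mul]
      _ ≤ (psiMin psi)⁻¹ * ε ^ 2 :=
          mul_le_mul_of_nonneg_left hd2 (inv_nonneg.mpr hmin_pos.le)
  have B2 : (1 / (2 * ψ)) * ∑ i, d i ^ 2 / psi i ≤ (psiMin psi)⁻¹ * (ε / ψ) * ε := by
    have h1 : (1 / (2 * ψ)) * ∑ i, d i ^ 2 / psi i
        ≤ (1 / (2 * ψ)) * ((psiMin psi)⁻¹ * ε ^ 2) :=
      mul_le_mul_of_nonneg_left hB (by positivity)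
    have h2 : (1 / (2 * ψ)) * ((psiMin psi)⁻¹ * ε ^ 2)
        ≤ (psiMin psi)⁻¹ * (ε / ψ) * ε := by
      rw [div_mul_eq_mul_div, one_mul, div_le_iff₀ (by linarith : (0:ℝ) < 2 * ψ)]
      have : (psiMin psi)⁻¹ * (ε / ψ) * ε * (2 * ψ) = 2 * ((psiMin psi)⁻¹ * ε ^ 2) := by
        field_simp
      rw [this]
      nlinarith [mul_nonneg (inv_nonneg.mpr hmin_pos.le) (sq_nonneg ε)]
    linarith
  have B3 : -(∑ i, v i * d i) ≤ enorm v * ε := by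
    have h1 : -(∑ i, v i * d i) ≤ ∑ i, |v i| * |d i| := by
      rw [← Finset.sum_neg_distrib]
      refine Finset.sum_le_sum fun i _ => ?_
      rw [← abs_mul]
      exact (neg_le_abs _)
    have h2 : (∑ i, |v i| * |d i|) ≤ enorm v * enorm d := cs v d
    have h3 : enorm v * enorm d ≤ enorm v * ε := mul_le_mul_of_nonneg_left hnd (hnormnn v)
    linarith
  -- decomposition of H1
  have hzd : ∀ i, z i - zeta0 Sig i = ψ * zetaTilde psi c v i + d i := by
    intro i; rw [hdi i]; ring
  have e1 : ∑ i, (z i - zeta0 Sig i) ^ 2 / psi i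
      = ψ ^ 2 * (∑ i, zetaTilde psi c v i ^ 2 / psi i)
        + 2 * ψ * (∑ i, zetaTilde psi c v i * d i / psi i) + ∑ i, d i ^ 2 / psi i := by
    rw [Finset.mul_sum, Finset.mul_sum, ← Finset.sum_add_distrib, ← Finset.sum_add_distrib]
    refine Finset.sum_congr rfl fun i _ => ?_
    rw [hzd i]
    field_simp [(hpsi i).ne']
    ring
  have e2 : ∑ i, v i * (z i - zeta0 Sig i)
      = ψ * (∑ i, v i * zetaTilde psi c v i) + ∑ i, v i * d i := by
    rw [Finset.mul_sum, ← Finset.sum_add_distrib]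
    refine Finset.sum_congr rfl fun i _ => ?_
    rw [hzd i]
    ring
  have hH : H1 Sig ψ psi v z
      = -(ψ / 2) * (∑ i, v i * zetaTilde psi c v i)
        + (∑ i, zetaTilde psi c v i * d i / psi i)
        + (1 / (2 * ψ)) * (∑ i, d i ^ 2 / psi i) - ∑ i, v i * d i := by
    rw [H1, e1, e2, sq_sum_eq psi c v hpsi hc]
    field_simp
    ring
  rw [hH]
  have hR : ((psiMin psi)⁻¹ * (enorm (zetaTilde psi c v) + ε / ψ) + enorm v) * ε
      = (psiMin psi)⁻¹ * (enorm (zetaTilde psi c v) * ε)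
        + (psiMin psi)⁻¹ * (ε / ψ) * ε + enorm v * ε := by ring
  linarith [B1, B2, B3]

end Stmt14
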